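/- arXiv:1207.0850 — 2 statements merged into one kernel-verified Lean document; each statement's English description precedes it below -/
import Mathlib

section
/- Let Y ∈ gl_M(F_p) have irreducible characteristic polynomial, let ψ be a nontrivial additive character of F_p, and define ψ_Y : sl_M(F_p) → ℂ× by ψ_Y(X) = ψ(tr(XY)). Then for any X ∈ sl_M(F_p) and any unipotent radical n of a proper parabolic subalgebra p ⊊ gl_M(F_p), the sum ∑_{N ∈ n} ψ_Y(X + N) equals zero. -/
open scoped Classical

private lemma aux_sum_mulVec {m : ℕ} {R : Type*} [CommRing R] {ι : Type*} (s : Finset ι)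
    (A : ι → Matrix (Fin m) (Fin m) R) (v : Fin m → R) :
    (∑ j ∈ s, A j).mulVec v = ∑ j ∈ s, (A j).mulVec v := by
  induction s using Finset.cons_induction with
  | empty => simp [Matrix.zero_mulVec]
  | cons a s ha ih => rw [Finset.sum_cons, Finset.sum_cons, Matrix.add_mulVec, ih]

/-- Let `Y ∈ gl_M(F_p)` have irreducible characteristic polynomial, `ψ` a
nontrivial additive character of `F_p`, and `ψ_Y(X) = ψ(tr(XY))`.  For any
trace-zero `X` and the nilpotent radical `n` of a proper parabolic subalgebra
of `gl_M(F_p)` (the stabilizer of a nontrivial flag `W`), the sum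
`∑_{N ∈ n} ψ_Y(X + N)` vanishes. -/
theorem sum_psiY_over_nilradical_eq_zero (p M r : ℕ) [Fact p.Prime] (hr : 1 ≤ r)
    (ψ : AddChar (ZMod p) ℂ) (hψ : ψ ≠ 1)
    (Y : Matrix (Fin M) (Fin M) (ZMod p)) (hY : Irreducible Y.charpoly)
    (X : Matrix (Fin M) (Fin M) (ZMod p)) (hX : X.trace = 0)
    (W : Fin (r + 2) → Submodule (ZMod p) (Fin M → ZMod p))
    (hmono : StrictMono W) (h0 : W 0 = ⊥) (htop : W (Fin.last (r + 1)) = ⊤) :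
    ∑ N ∈ Finset.univ.filter
        (fun N : Matrix (Fin M) (Fin M) (ZMod p) =>
          ∀ i : Fin (r + 1), ∀ v ∈ W i.succ, N.mulVec v ∈ W i.castSucc),
      ψ (((X + N) * Y).trace) = 0 := by
  classical
  -- M is positive
  have hM : 0 < M := by
    rcases Nat.eq_zero_or_pos M with h | h
    · exfalso
      have h1 : Y.charpoly = 1 := by
        rw [Matrix.charpoly]
        haveI : IsEmpty (Fin M) := by subst h; infer_instance
        exact Matrix.det_isEmpty
      rw [h1] at hY
      exact hY.not_isUnit isUnit_one
    · exact h
  -- basic Fin facts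
  have h01 : (0 : Fin (r + 2)) < 1 := by
    rw [Fin.lt_def]; simp [Fin.val_one]
  have h1last : (1 : Fin (r + 2)) < Fin.last (r + 1) := by
    rw [Fin.lt_def]; simp [Fin.val_one]; omega
  -- annihilation lemma
  have hann : ∀ (q : Polynomial (ZMod p)) (u : Fin M → ZMod p),
      (Polynomial.aeval Y q).mulVec u = 0 → ¬ Y.charpoly ∣ q → u = 0 := by
    intro q u h hdvd
    obtain ⟨a, b, hab⟩ := (hY.coprime_iff_not_dvd.mpr hdvd)
    have h1 : (Polynomial.aeval Y (a * Y.charpoly + b * q)) = 1 := by rw [hab]; simp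
    rw [map_add, map_mul, map_mul, Matrix.aeval_self_charpoly, mul_zero, zero_add] at h1
    have h2 := congrArg (fun A : Matrix (Fin M) (Fin M) (ZMod p) => A.mulVec u) h1
    simp only [Matrix.one_mulVec] at h2
    rw [← Matrix.mulVec_mulVec, h, Matrix.mulVec_zero] at h2
    exact h2.symm
  -- Y does not stabilize W 1
  have hnotinv : ¬ (∀ x ∈ W 1, Y.mulVec x ∈ W 1) := by
    intro hinv
    obtain ⟨u₀, hu₀, hu₀n⟩ := SetLike.exists_of_lt
      (h0 ▸ hmono h01 : (⊥ : Submodule (ZMod p) (Fin M → ZMod p)) < W 1)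
    have hu₀ne : u₀ ≠ 0 := by simpa using hu₀n
    have hpow : ∀ k : ℕ, (Y ^ k).mulVec u₀ ∈ W 1 := by
      intro k
      induction k with
      | zero => simpa [Matrix.one_mulVec] using hu₀
      | succ k ih =>
        rw [pow_succ', ← Matrix.mulVec_mulVec]
        exact hinv _ ih
    have hli : LinearIndependent (ZMod p) (fun k : Fin M => (Y ^ (k : ℕ)).mulVec u₀) := by
      rw [Fintype.linearIndependent_iff]
      intro c hc k
      set q : Polynomial (ZMod p) := ∑ j : Fin M, Polynomial.C (c j) * Polynomial.X ^ (j : ℕ)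
        with hqdef
      have haq : (Polynomial.aeval Y q).mulVec u₀
          = ∑ j : Fin M, c j • (Y ^ (j : ℕ)).mulVec u₀ := by
        rw [hqdef, map_sum, aux_sum_mulVec]
        refine Finset.sum_congr rfl fun j _ => ?_
        rw [map_mul, map_pow, Polynomial.aeval_X, Polynomial.aeval_C]
        rw [Algebra.algebraMap_eq_smul_one, smul_mul_assoc, one_mul,
          Matrix.smul_mulVec]
      have hq0 : q = 0 := by
        by_cases hdvd : Y.charpoly ∣ q
        · refine Polynomial.eq_zero_of_dvd_of_degree_lt hdvd ?_
          have hdeg : Y.charpoly.degree = (M : ℕ) := by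
            simpa using Y.charpoly_degree_eq_dim
          rw [hdeg, hqdef]
          refine lt_of_le_of_lt (Polynomial.degree_sum_le _ _) ?_
          rw [Finset.sup_lt_iff (by exact_mod_cast WithBot.bot_lt_coe M)]
          intro j _
          refine lt_of_le_of_lt (Polynomial.degree_C_mul_X_pow_le _ _) ?_
          exact_mod_cast j.isLt
        · exact absurd (hann q u₀ (by rw [haq, hc]) hdvd) hu₀ne
      have hcoeff : q.coeff (k : ℕ) = c k := by
        rw [hqdef, Polynomial.finset_sum_coeff]
        rw [Finset.sum_eq_single k]
        · simp [Polynomial.coeff_C_mul_X_pow]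
        · intro j _ hjk
          rw [Polynomial.coeff_C_mul_X_pow]
          simp [Fin.val_eq_val, (Ne.symm hjk)]
        · simp
      rw [← hcoeff, hq0, Polynomial.coeff_zero]
    have hli' : LinearIndependent (ZMod p)
        (fun k : Fin M => (⟨(Y ^ (k : ℕ)).mulVec u₀, hpow k⟩ : W 1)) :=
      LinearIndependent.of_comp (W 1).subtype hli
    have hle : M ≤ Module.finrank (ZMod p) (W 1) := by
      simpa using hli'.fintype_card_le_finrank
    have hrk : Module.finrank (ZMod p) (Fin M → ZMod p) = M := by simp
    have hle2 : Module.finrank (ZMod p) (W 1) ≤ M :=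
      (Submodule.finrank_le (W 1)).trans_eq hrk
    have htop1 : W 1 = ⊤ := by
      apply Submodule.eq_top_of_finrank_eq
      rw [hrk]
      exact le_antisymm hle2 hle
    have hlt := hmono h1last
    rw [htop, htop1] at hlt
    exact lt_irrefl _ hlt
  push_neg at hnotinv
  obtain ⟨u, hu, hYu⟩ := hnotinv
  -- separating functional
  obtain ⟨f, hf, hfbot⟩ := (W 1).exists_dual_map_eq_bot_of_notMem hYu inferInstance
  have hfW1 : ∀ x ∈ W 1, f x = 0 := by
    intro x hx
    have hmem : f x ∈ Submodule.map f (W 1) := Submodule.mem_map_of_mem hx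
    rw [hfbot] at hmem
    exact (Submodule.mem_bot (ZMod p)).mp hmem
  -- a value where ψ is nontrivial
  obtain ⟨t, ht⟩ := AddChar.ne_one_iff.mp hψ
  set c : ZMod p := t * (f (Y.mulVec u))⁻¹ with hcdef
  set N₁ : Matrix (Fin M) (Fin M) (ZMod p) :=
    Matrix.of (fun i j => c * u i * f (fun j' => if j = j' then 1 else 0)) with hN₁def
  have hN₁mul : ∀ w : Fin M → ZMod p, N₁.mulVec w = (c * f w) • u := by
    intro w
    ext i
    have hl : N₁.mulVec w i
        = ∑ j : Fin M, c * u i * f (fun j' => if j = j' then 1 else 0) * w j := by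
      simp [Matrix.mulVec, dotProduct, hN₁def]
    rw [hl, Pi.smul_apply, smul_eq_mul, LinearMap.pi_apply_eq_sum_univ f w,
      Finset.mul_sum, Finset.sum_mul]
    refine Finset.sum_congr rfl fun j _ => ?_
    rw [smul_eq_mul]
    ring
  have hN₁mem : ∀ i : Fin (r + 1), ∀ v ∈ W i.succ, N₁.mulVec v ∈ W i.castSucc := by
    intro i v hv
    rw [hN₁mul]
    by_cases hi : i = 0
    · subst hi
      rw [Fin.succ_zero_eq_one] at hv
      rw [hfW1 v hv]
      simp
    · have h1le : (1 : Fin (r + 2)) ≤ i.castSucc := by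
        rw [Fin.le_def]
        have hge : (1 : ℕ) ≤ i.val := Nat.one_le_iff_ne_zero.mpr (fun h => hi (Fin.ext h))
        simpa [Fin.val_one] using hge
      exact Submodule.smul_mem _ _ (hmono.monotone h1le hu)
  have hN₁tr : (N₁ * Y).trace = t := by
    have hfY : f (Y.mulVec u) ≠ 0 := hf
    have htr : (N₁ * Y).trace = c * f (Y.mulVec u) := by
      have hlhs : (N₁ * Y).trace = ∑ i : Fin M, ∑ j : Fin M, N₁ i j * Y j i := by
        simp [Matrix.trace, Matrix.diag, Matrix.mul_apply]
      rw [hlhs, Finset.sum_comm, LinearMap.pi_apply_eq_sum_univ f (Y.mulVec u),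
        Finset.mul_sum]
      refine Finset.sum_congr rfl fun j _ => ?_
      have hmv : Y.mulVec u j = ∑ i : Fin M, Y j i * u i := by
        simp [Matrix.mulVec, dotProduct]
      rw [hmv, smul_eq_mul, Finset.sum_mul, Finset.mul_sum]
      refine Finset.sum_congr rfl fun i _ => ?_
      simp only [hN₁def, Matrix.of_apply]
      ring
    rw [htr, hcdef, mul_assoc, inv_mul_cancel₀ hfY, mul_one]
  -- the shift argument
  set s := Finset.univ.filter
      (fun N : Matrix (Fin M) (Fin M) (ZMod p) =>
        ∀ i : Fin (r + 1), ∀ v ∈ W i.succ, N.mulVec v ∈ W i.castSucc) with hsdef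
  set S := ∑ N ∈ s, ψ (((X + N) * Y).trace) with hSdef
  have hmem : ∀ N : Matrix (Fin M) (Fin M) (ZMod p),
      N ∈ s ↔ ∀ i : Fin (r + 1), ∀ v ∈ W i.succ, N.mulVec v ∈ W i.castSucc := by
    intro N; simp [hsdef]
  have hshift : S = ψ t * S := by
    have h1 : S = ∑ N ∈ s, ψ (((X + (N + N₁)) * Y).trace) := by
      refine Finset.sum_equiv (Equiv.subRight N₁) ?_ ?_
      · intro N
        rw [hmem, hmem]
        constructor
        · intro hN i v hv
          simp only [Equiv.subRight_apply, Matrix.sub_mulVec]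
          exact Submodule.sub_mem _ (hN i v hv) (hN₁mem i v hv)
        · intro hN i v hv
          have hN' := hN i v hv
          simp only [Equiv.subRight_apply, Matrix.sub_mulVec] at hN'
          have h2 := Submodule.add_mem _ hN' (hN₁mem i v hv)
          rwa [sub_add_cancel] at h2
      · intro N _
        simp only [Equiv.subRight_apply]
        rw [sub_add_cancel]
    conv_lhs => rw [h1]
    have h2 : ∀ N : Matrix (Fin M) (Fin M) (ZMod p),
        ψ (((X + (N + N₁)) * Y).trace) = ψ t * ψ (((X + N) * Y).trace) := by
      intro N
      have htr2 : ((X + (N + N₁)) * Y).trace = (N₁ * Y).trace + ((X + N) * Y).trace := by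
        rw [show X + (N + N₁) = N₁ + (X + N) by abel, add_mul, Matrix.trace_add]
      rw [htr2, AddChar.map_add_eq_mul, hN₁tr]
    calc ∑ N ∈ s, ψ (((X + (N + N₁)) * Y).trace)
        = ∑ N ∈ s, ψ t * ψ (((X + N) * Y).trace) := Finset.sum_congr rfl fun N _ => h2 N
      _ = ψ t * S := by rw [hSdef, Finset.mul_sum]
  have hfactor : (ψ t - 1) * S = 0 := by
    rw [sub_mul, one_mul, ← hshift, sub_self]
  rcases mul_eq_zero.mp hfactor with h | h
  · exact absurd (by linear_combination h : ψ t = 1) ht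
  · exact h
end

section
/- If m divides n strongly (i.e., m | n and every prime dividing n also divides m), then Γ₁(n) is a normal subgroup of Γ₁(m). -/
/-- Membership in `Γ₁(n) = ∩_{p^e ∥ n} Γ₁(p^e)`. -/
def Gamma1Mem (M n : ℕ) (g : Matrix.SpecialLinearGroup (Fin M) ℤ) : Prop :=
  ∀ p : ℕ, p.Prime → p ∣ n →
    (∀ i j : Fin M, i < j → ((p : ℤ) ^ (n.factorization p - 1)) ∣ g.1 i j) ∧
    (∀ i j : Fin M, j ≤ i →
      ((p : ℤ) ^ (n.factorization p)) ∣ (g.1 i j - if i = j then 1 else 0))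

/-- Strictly-lower entries of the inverse of an `SL` matrix whose strictly-lower
entries are divisible by `p` are divisible by `p`. -/
lemma inv_lower_dvd (M : ℕ) (p : ℕ) (hp : p.Prime)
    (g : Matrix.SpecialLinearGroup (Fin M) ℤ)
    (hgl : ∀ i j : Fin M, j < i → (p : ℤ) ∣ g.1 i j) :
    ∀ i j : Fin M, j < i → (p : ℤ) ∣ (g⁻¹).1 i j := by
  haveI : Fact p.Prime := ⟨hp⟩
  intro i j hij
  let π : ℤ →+* ZMod p := Int.castRingHom (ZMod p)
  let A : Matrix (Fin M) (Fin M) (ZMod p) := π.mapMatrix g.1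
  have hdet : A.det = 1 := by
    show ((Int.castRingHom (ZMod p)).mapMatrix g.1).det = 1
    rw [← RingHom.map_det, Matrix.SpecialLinearGroup.det_coe, map_one]
  haveI : Invertible A := A.invertibleOfIsUnitDet (by rw [hdet]; exact isUnit_one)
  have hA : A.BlockTriangular (id : Fin M → Fin M) := by
    intro a b hab
    have := hgl a b hab
    simpa [A, π, ZMod.intCast_zmod_eq_zero_iff_dvd] using this
  have hmul : g.1 * (g⁻¹).1 = 1 := by
    show g.1 * (g.1).adjugate = 1
    rw [Matrix.mul_adjugate, Matrix.SpecialLinearGroup.det_coe, one_smul]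
  have hAinv : A⁻¹ = π.mapMatrix (g⁻¹).1 := by
    apply Matrix.inv_eq_right_inv
    have : π.mapMatrix (g.1 * (g⁻¹).1) = π.mapMatrix (1 : Matrix (Fin M) (Fin M) ℤ) :=
      congrArg _ hmul
    simpa [A] using this
  have h0 : A⁻¹ i j = 0 := Matrix.blockTriangular_inv_of_blockTriangular hA hij
  rw [hAinv] at h0
  have : ((g⁻¹).1 i j : ZMod p) = 0 := h0
  exact (ZMod.intCast_zmod_eq_zero_iff_dvd _ _).mp this

/-- If `m` divides `n` strongly (`m ∣ n` and every prime dividing `n` divides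
`m`), then `Γ₁(n)` is a normal subgroup of `Γ₁(m)`. -/
theorem Gamma1_strong_divide_normal (M m n : ℕ) (hn : 0 < n) (hmn : m ∣ n)
    (hrad : ∀ p : ℕ, p.Prime → p ∣ n → p ∣ m)
    (g h : Matrix.SpecialLinearGroup (Fin M) ℤ)
    (hg : Gamma1Mem M m g) (hh : Gamma1Mem M n h) :
    Gamma1Mem M n (g * h * g⁻¹) := by
  intro p hp hpn
  have hn0 : n ≠ 0 := hn.ne'
  have hm0 : m ≠ 0 := by rintro rfl; exact hn0 (zero_dvd_iff.mp hmn)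
  have hpm : p ∣ m := hrad p hp hpn
  have he1 : 1 ≤ n.factorization p := (Nat.Prime.factorization_pos_of_dvd hp hn0 hpn)
  have hf1 : 1 ≤ m.factorization p := (Nat.Prime.factorization_pos_of_dvd hp hm0 hpm)
  set e := n.factorization p with he
  -- g is unipotent-upper-triangular mod p
  have hgl' : ∀ i j : Fin M, j ≤ i → (p : ℤ) ∣ (g.1 i j - if i = j then 1 else 0) := by
    intro i j hij
    have h2 := (hg p hp hpm).2 i j hij
    exact (dvd_pow_self (p : ℤ) (by omega)).trans h2
  have hgl : ∀ i j : Fin M, j < i → (p : ℤ) ∣ g.1 i j := by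
    intro i j hij
    have := hgl' i j hij.le
    rwa [if_neg hij.ne', sub_zero] at this
  -- the inverse of g is upper triangular mod p
  have hinv : ∀ i j : Fin M, j < i → (p : ℤ) ∣ (g⁻¹).1 i j :=
    inv_lower_dvd M p hp g hgl
  -- divisibility facts about (h - 1)
  have hA1 : ∀ k l : Fin M, (p : ℤ) ^ (e - 1) ∣ (h.1 - 1) k l := by
    intro k l
    rcases lt_or_ge k l with hkl | hkl
    · have := (hh p hp hpn).1 k l hkl
      simpa [Matrix.sub_apply, Matrix.one_apply, hkl.ne] using this
    · have := (hh p hp hpn).2 k l hkl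
      refine (pow_dvd_pow _ (Nat.sub_le e 1)).trans ?_
      simpa [Matrix.sub_apply, Matrix.one_apply] using this
  have hA2 : ∀ k l : Fin M, l ≤ k → (p : ℤ) ^ e ∣ (h.1 - 1) k l := by
    intro k l hkl
    have := (hh p hp hpn).2 k l hkl
    simpa [Matrix.sub_apply, Matrix.one_apply] using this
  -- key identity for entries of the conjugate
  have hW : ∀ i j : Fin M,
      (g * h * g⁻¹).1 i j - (if i = j then 1 else 0) =
        ∑ l, (∑ k, g.1 i k * (h.1 - 1) k l) * (g⁻¹).1 l j := by
    intro i j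
    have hgG : g.1 * (g⁻¹).1 = 1 := by
      show g.1 * (g.1).adjugate = 1
      rw [Matrix.mul_adjugate, Matrix.SpecialLinearGroup.det_coe, one_smul]
    have hcoe : (g * h * g⁻¹).1 = g.1 * h.1 * (g⁻¹).1 := by
      simp
    have hmat : g.1 * (h.1 - 1) * (g⁻¹).1 = g.1 * h.1 * (g⁻¹).1 - 1 := by
      rw [Matrix.mul_sub, Matrix.mul_one, Matrix.sub_mul, hgG]
    have := congrFun (congrFun hmat i) j
    rw [Matrix.sub_apply, Matrix.one_apply] at this
    rw [hcoe, ← this, Matrix.mul_apply]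
    refine Finset.sum_congr rfl fun l _ => ?_
    rw [Matrix.mul_apply]
  constructor
  · intro i j hij
    have hkey := hW i j
    rw [if_neg hij.ne, sub_zero] at hkey
    rw [hkey]
    refine Finset.dvd_sum fun l _ => dvd_mul_of_dvd_left ?_ _
    exact Finset.dvd_sum fun k _ => (hA1 k l).mul_left _
  · intro i j hij
    rw [hW i j]
    refine Finset.dvd_sum fun l _ => ?_
    rcases le_or_gt l j with hlj | hjl
    · refine dvd_mul_of_dvd_left ?_ _
      refine Finset.dvd_sum fun k _ => ?_
      rcases le_or_gt l k with hlk | hkl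
      · exact (hA2 k l hlk).mul_left _
      · have h1 : (p : ℤ) ∣ g.1 i k := hgl i k (lt_of_lt_of_le hkl (hlj.trans hij))
        have h2 := hA1 k l
        have hdvd := mul_dvd_mul h1 h2
        have hpe : (p : ℤ) ^ e = (p : ℤ) * (p : ℤ) ^ (e - 1) := by
          rw [← pow_succ']
          congr 1
          omega
        rw [hpe]
        exact hdvd
    · have h1 : (p : ℤ) ^ (e - 1) ∣ ∑ k, g.1 i k * (h.1 - 1) k l :=
        Finset.dvd_sum fun k _ => (hA1 k l).mul_left _
      have h2 : (p : ℤ) ∣ (g⁻¹).1 l j := hinv l j hjl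
      have hpe : (p : ℤ) ^ e = (p : ℤ) ^ (e - 1) * p := by
        rw [← pow_succ]
        congr 1
        omega
      rw [hpe]
      exact mul_dvd_mul h1 h2
end
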